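/- The pair of parameters (f, b) is not identifiable: if f₁·b₁ = f₂·b₂ (with f₁, f₂ ≠ 0 and b₁, b₂ > 0), then for every n ≥ 1 the law of the observation vector (X_1^{(1)}, …, X_n^{(1)}) under parameters (f₁, b₁) coincides with the law of (X_1^{(2)}, …, X_n^{(2)}) under parameters (f₂, b₂); consequently no consistent estimator of the pair (f, b) exists. -/

import Mathlib

open MeasureTheory ProbabilityTheory Filter

noncomputable section

namespace HiddenAR

variable {Ω : Type*} [MeasurableSpace Ω]

/-- The combined noise path `(w_{t+1})_{t≥0}, (v_{t+1})_{t≥0}` as a single random element. -/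
def noisePath (w v : ℕ → Ω → ℝ) : Ω → ((ℕ ⊕ ℕ) → ℝ) :=
  fun ω => Sum.elim (fun t => w (t + 1) ω) (fun t => v (t + 1) ω)

/-- Partially observed Gaussian linear system with stationary hidden AR process:
`X_t = f·Y_{t−1} + σ·w_t`, `Y_t = a·Y_{t−1} + b·v_t`, with `(w_t)_{t≥1}`, `(v_t)_{t≥1}`
mutually independent i.i.d. standard Gaussian sequences independent of `(X_0, Y_0)`,
`a² < 1`, `b > 0`, `f ≠ 0`, `σ > 0`, stationary `Y_0 ~ N(0, b²/(1−a²))`,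
square-integrable `X_0`. -/
structure System (μ : Measure Ω) (X Y w v : ℕ → Ω → ℝ) (a b f σ : ℝ) : Prop where
  isProb : IsProbabilityMeasure μ
  ha : a ^ 2 < 1
  hb : 0 < b
  hf : f ≠ 0
  hσ : 0 < σ
  measX : ∀ t, Measurable (X t)
  measY : ∀ t, Measurable (Y t)
  measw : ∀ t, Measurable (w t)
  measv : ∀ t, Measurable (v t)
  hX : ∀ t, 1 ≤ t → ∀ ω, X t ω = f * Y (t - 1) ω + σ * w t ω
  hY : ∀ t, 1 ≤ t → ∀ ω, Y t ω = a * Y (t - 1) ω + b * v t ω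
  indepNoise : iIndepFun
    (Sum.elim (fun t => w (t + 1)) (fun t => v (t + 1))) μ
  indepInit : IndepFun (fun ω => (X 0 ω, Y 0 ω)) (noisePath w v) μ
  law_w : ∀ t, 1 ≤ t → μ.map (w t) = gaussianReal 0 1
  law_v : ∀ t, 1 ≤ t → μ.map (v t) = gaussianReal 0 1
  law_Y0 : μ.map (Y 0) = gaussianReal 0 (Real.toNNReal (b ^ 2 / (1 - a ^ 2)))
  sqInt_X0 : MemLp (X 0) 2 μ

section Aux

variable {μ : Measure Ω}

lemma iIndepFun_precomp {ι ι' : Type*} {β : Type*} [m : MeasurableSpace β]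
    {f : ι → Ω → β} {u : ι' → ι} (hu : Function.Injective u)
    (h : iIndepFun f μ) :
    iIndepFun (fun i => f (u i)) μ := by
  classical
  rw [iIndepFun_iff_measure_inter_preimage_eq_mul] at h ⊢
  intro S sets hsets
  have key := h (S.map ⟨u, hu⟩)
    (sets := Function.extend u sets fun _ => Set.univ)
    (fun j hj => by
      obtain ⟨i, hi, rfl⟩ := Finset.mem_map.1 hj
      show MeasurableSet (Function.extend u sets (fun _ => Set.univ) (u i))
      rw [hu.extend_apply]
      exact hsets i hi)
  rw [Finset.prod_map] at key
  have h1 : (⋂ j ∈ S.map ⟨u, hu⟩, f j ⁻¹' Function.extend u sets (fun _ => Set.univ) j)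
      = ⋂ i ∈ S, f (u i) ⁻¹' sets i := by
    ext ω
    simp only [Set.mem_iInter, Finset.mem_map, Function.Embedding.coeFn_mk]
    constructor
    · intro H i hi
      have := H (u i) ⟨i, hi, rfl⟩
      rwa [hu.extend_apply] at this
    · rintro H j ⟨i, hi, rfl⟩
      rw [hu.extend_apply]
      exact H i hi
  rw [h1] at key
  rw [key]
  refine Finset.prod_congr rfl fun i _ => ?_
  rw [Function.Embedding.coeFn_mk, hu.extend_apply]

lemma map_tuple_eq_pi {ι : Type*} [Fintype ι] [IsProbabilityMeasure μ]
    {f : ι → Ω → ℝ} (hf : ∀ i, Measurable (f i))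
    (h : iIndepFun f μ) :
    μ.map (fun ω i => f i ω) = Measure.pi (fun i => μ.map (f i)) := by
  haveI : ∀ i, IsProbabilityMeasure (μ.map (f i)) :=
    fun i => Measure.isProbabilityMeasure_map (hf i).aemeasurable
  refine (Measure.pi_eq fun s hs => ?_).symm
  rw [Measure.map_apply (measurable_pi_lambda _ hf) (MeasurableSet.univ_pi hs)]
  have heq : (fun ω i => f i ω) ⁻¹' Set.pi Set.univ s = ⋂ i, f i ⁻¹' s i := by
    ext ω; simp [Set.mem_univ_pi]
  rw [heq, h.meas_iInter fun i => ⟨s i, hs i, rfl⟩]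
  exact Finset.prod_congr rfl fun i _ => (Measure.map_apply (hf i) (hs i)).symm

lemma iIndepFun_of_map {ι : Type*} {Ω' : Type*} [MeasurableSpace Ω']
    {E : Ω → Ω'} (hE : Measurable E) {h : ι → Ω' → ℝ} (hh : ∀ i, Measurable (h i))
    (hi : iIndepFun
      (fun i ω => h i (E ω)) μ) :
    iIndepFun h (μ.map E) := by
  rw [iIndepFun_iff_measure_inter_preimage_eq_mul] at hi ⊢
  intro S sets hsets
  rw [Measure.map_apply hE (Finset.measurableSet_biInter _ fun i hi => (hh i) (hsets i hi))]
  have hpre : E ⁻¹' (⋂ i ∈ S, h i ⁻¹' sets i) = ⋂ i ∈ S, (fun ω => h i (E ω)) ⁻¹' sets i := by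
    ext ω; simp
  rw [hpre, hi S hsets]
  exact Finset.prod_congr rfl fun i hi' =>
    (Measure.map_apply hE ((hh i) (hsets i hi'))).symm

lemma indepFun_of_map {Ω' : Type*} [MeasurableSpace Ω'] {α β : Type*}
    [MeasurableSpace α] [MeasurableSpace β] [IsProbabilityMeasure μ]
    {E : Ω → Ω'} (hE : Measurable E) {f : Ω' → α} {g : Ω' → β}
    (hf : Measurable f) (hg : Measurable g)
    (h : IndepFun (f ∘ E) (g ∘ E) μ) :
    IndepFun f g (μ.map E) := by
  haveI : IsProbabilityMeasure (μ.map E) := Measure.isProbabilityMeasure_map hE.aemeasurable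
  rw [indepFun_iff_map_prod_eq_prod_map_map hf.aemeasurable hg.aemeasurable]
  rw [indepFun_iff_map_prod_eq_prod_map_map (hf.comp hE).aemeasurable
    (hg.comp hE).aemeasurable] at h
  have hcomp : (fun ω => ((f ∘ E) ω, (g ∘ E) ω)) = (fun ω' => (f ω', g ω')) ∘ E := rfl
  rw [hcomp, ← Measure.map_map (hf.prodMk hg) hE] at h
  rw [h, Measure.map_map hf hE, Measure.map_map hg hE]

end Aux

/-! ### Canonical space -/

abbrev CanSp : Type := ℝ × ℝ × (ℕ → ℝ) × (ℕ → ℝ)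

def cw : ℕ → CanSp → ℝ := fun t p => p.2.2.1 t
def cv : ℕ → CanSp → ℝ := fun t p => p.2.2.2 t

def cY (a b : ℝ) : ℕ → CanSp → ℝ
  | 0 => fun p => p.2.1
  | (t+1) => fun p => a * cY a b t p + b * p.2.2.2 (t+1)

def cX (a b f σ : ℝ) : ℕ → CanSp → ℝ
  | 0 => fun p => p.1
  | (t+1) => fun p => f * cY a b t p + σ * p.2.2.1 (t+1)

lemma meas_cY (a b : ℝ) : ∀ t, Measurable (cY a b t)
  | 0 => measurable_snd.fst
  | (t+1) => ((meas_cY a b t).const_mul a).add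
      (by fun_prop)

lemma meas_cX (a b f σ : ℝ) : ∀ t, Measurable (cX a b f σ t)
  | 0 => measurable_fst
  | (t+1) => ((meas_cY a b t).const_mul f).add
      (by fun_prop)

lemma meas_cw (t : ℕ) : Measurable (cw t) :=
  (measurable_pi_apply t).comp measurable_snd.snd.fst

lemma meas_cv (t : ℕ) : Measurable (cv t) :=
  (measurable_pi_apply t).comp measurable_snd.snd.snd

def emb (X Y w v : ℕ → Ω → ℝ) : Ω → CanSp :=
  fun ω => (X 0 ω, Y 0 ω, fun t => w t ω, fun t => v t ω)

lemma meas_emb {X Y w v : ℕ → Ω → ℝ} (hX : Measurable (X 0)) (hY : Measurable (Y 0))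
    (hw : ∀ t, Measurable (w t)) (hv : ∀ t, Measurable (v t)) :
    Measurable (emb X Y w v) :=
  hX.prodMk (hY.prodMk ((measurable_pi_lambda _ hw).prodMk (measurable_pi_lambda _ hv)))

lemma cY_emb {μ : Measure Ω} {X Y w v : ℕ → Ω → ℝ} {a b f σ : ℝ}
    (hs : System μ X Y w v a b f σ) : ∀ t ω, cY a b t (emb X Y w v ω) = Y t ω
  | 0, ω => rfl
  | (t+1), ω => by
      rw [show cY a b (t+1) (emb X Y w v ω)
          = a * cY a b t (emb X Y w v ω) + b * v (t+1) ω from rfl,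
        cY_emb hs t ω]
      exact (hs.hY (t+1) (Nat.le_add_left 1 t) ω).symm

/-- Transfer a system to the canonical space. -/
lemma transfer {μ : Measure Ω} {X Y w v : ℕ → Ω → ℝ} {a b f σ : ℝ}
    (hs : System μ X Y w v a b f σ) :
    System (μ.map (emb X Y w v)) (cX a b f σ) (cY a b) cw cv a b f σ := by
  haveI := hs.isProb
  have hE : Measurable (emb X Y w v) :=
    meas_emb (hs.measX 0) (hs.measY 0) hs.measw hs.measv
  have hYe : ∀ t ω, cY a b t (emb X Y w v ω) = Y t ω := cY_emb hs
  have hXe : ∀ t ω, cX a b f σ t (emb X Y w v ω) = X t ω := by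
    intro t ω
    match t with
    | 0 => rfl
    | (t+1) =>
      rw [show cX a b f σ (t+1) (emb X Y w v ω)
          = f * cY a b t (emb X Y w v ω) + σ * w (t+1) ω from rfl, hYe t ω]
      exact (hs.hX (t+1) (Nat.le_add_left 1 t) ω).symm
  refine ⟨Measure.isProbabilityMeasure_map hE.aemeasurable, hs.ha, hs.hb, hs.hf, hs.hσ,
    meas_cX a b f σ, meas_cY a b, meas_cw, meas_cv, ?_, ?_, ?_, ?_, ?_, ?_, ?_, ?_⟩
  · intro t ht p
    obtain ⟨s, rfl⟩ : ∃ s, t = s + 1 := ⟨t - 1, by omega⟩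
    rfl
  · intro t ht p
    obtain ⟨s, rfl⟩ : ∃ s, t = s + 1 := ⟨t - 1, by omega⟩
    rfl
  · refine iIndepFun_of_map hE
      (fun k => by cases k with
        | inl i => exact meas_cw (i+1)
        | inr j => exact meas_cv (j+1)) ?_
    have : (fun (k : ℕ ⊕ ℕ) ω =>
        Sum.elim (fun t => cw (t + 1)) (fun t => cv (t + 1)) k (emb X Y w v ω))
        = Sum.elim (fun t => w (t + 1)) (fun t => v (t + 1)) := by
      funext k ω; cases k <;> rfl
    rw [this]
    exact hs.indepNoise
  · refine indepFun_of_map hE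
      ((meas_cX a b f σ 0).prodMk (meas_cY a b 0))
      (measurable_pi_lambda _ fun k => by cases k with
        | inl i => exact meas_cw (i+1)
        | inr j => exact meas_cv (j+1)) ?_
    have h1 : ((fun p => (cX a b f σ 0 p, cY a b 0 p)) ∘ emb X Y w v)
        = fun ω => (X 0 ω, Y 0 ω) := rfl
    have h2 : (noisePath cw cv ∘ emb X Y w v) = noisePath w v := by
      funext ω
      show Sum.elim _ _ = Sum.elim _ _
      congr 1
    rw [h1, h2]
    exact hs.indepInit
  · intro t ht
    rw [Measure.map_map (meas_cw t) hE, show (cw t) ∘ emb X Y w v = w t from rfl]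
    exact hs.law_w t ht
  · intro t ht
    rw [Measure.map_map (meas_cv t) hE, show (cv t) ∘ emb X Y w v = v t from rfl]
    exact hs.law_v t ht
  · rw [Measure.map_map (meas_cY a b 0) hE,
      show (cY a b 0) ∘ emb X Y w v = Y 0 from rfl]
    exact hs.law_Y0
  · rw [memLp_map_measure_iff (meas_cX a b f σ 0).aestronglyMeasurable hE.aemeasurable]
    exact hs.sqInt_X0

/-- Scaling the hidden process by 1/2 gives a system with parameters `(2f, b/2)`. -/
lemma scale {μ : Measure Ω} {X Y w v : ℕ → Ω → ℝ} {a b f σ : ℝ}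
    (hs : System μ X Y w v a b f σ) :
    System μ X (fun t ω => Y t ω / 2) w v a (b / 2) (2 * f) σ := by
  have h1a : (0:ℝ) < 1 - a ^ 2 := by nlinarith [hs.ha]
  refine ⟨hs.isProb, hs.ha, by linarith [hs.hb], by
      have := hs.hf; intro h; exact this (by linarith), hs.hσ,
    hs.measX, fun t => (hs.measY t).div_const 2, hs.measw, hs.measv, ?_, ?_,
    hs.indepNoise, ?_, hs.law_w, hs.law_v, ?_, hs.sqInt_X0⟩
  · intro t ht ω
    rw [hs.hX t ht ω]; ring
  · intro t ht ω
    rw [hs.hY t ht ω]; ring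
  · have := hs.indepInit.comp
      (φ := fun q : ℝ × ℝ => (q.1, q.2 / 2)) (ψ := id)
      (measurable_fst.prodMk (measurable_snd.div_const 2)) measurable_id
    exact this
  · have heq : (fun ω => Y 0 ω / 2) = (fun x => (2:ℝ)⁻¹ * x) ∘ (Y 0) := by
      funext ω; simp [div_eq_inv_mul]
    rw [heq, ← Measure.map_map (measurable_const_mul _) (hs.measY 0), hs.law_Y0]
    rw [show (fun x => (2:ℝ)⁻¹ * x) = ((2:ℝ)⁻¹ * ·) from rfl, gaussianReal_map_const_mul]
    congr 1
    · simp
    · apply NNReal.coe_injective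
      rw [NNReal.coe_mul, NNReal.coe_mk, Real.coe_toNNReal _ (by positivity),
        Real.coe_toNNReal _ (by positivity)]
      ring

/-- solution of the AR recursion -/
lemma Y_expand {μ : Measure Ω} {X Y w v : ℕ → Ω → ℝ} {a b f σ : ℝ}
    (hs : System μ X Y w v a b f σ) (t : ℕ) (ω : Ω) :
    Y t ω = a ^ t * Y 0 ω +
      ∑ j ∈ Finset.range t, a ^ (t - 1 - j) * (b * v (j + 1) ω) := by
  induction t with
  | zero => simp
  | succ t ih =>
    rw [hs.hY (t+1) (Nat.le_add_left 1 t) ω]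
    rw [show (t + 1 - 1 : ℕ) = t from rfl, ih, Finset.sum_range_succ, Nat.sub_self, pow_zero]
    have hsum : ∑ j ∈ Finset.range t, a ^ (t - j) * (b * v (j + 1) ω)
        = ∑ j ∈ Finset.range t, a * (a ^ (t - 1 - j) * (b * v (j + 1) ω)) := by
      refine Finset.sum_congr rfl fun j hj => ?_
      have hj' := Finset.mem_range.1 hj
      rw [show t - j = (t - 1 - j) + 1 from by omega, pow_succ]; ring
    rw [hsum, pow_succ, mul_add, Finset.mul_sum]
    ring

/-- the pushforward map: observation as a function of `(f·Y₀, noise)`. -/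
def obsMap (a σ c : ℝ) (n : ℕ) (hn : 0 < n) :
    (ℝ × ((Fin n ⊕ Fin n) → ℝ)) → (Fin n → ℝ) :=
  fun p i => a ^ (i : ℕ) * p.1 +
    (∑ j ∈ Finset.range i, c * a ^ ((i : ℕ) - 1 - j) * p.2 (Sum.inr ⟨j % n, Nat.mod_lt j hn⟩)) +
    σ * p.2 (Sum.inl i)

lemma meas_obsMap (a σ c : ℝ) (n : ℕ) (hn : 0 < n) : Measurable (obsMap a σ c n hn) := by
  refine measurable_pi_lambda _ fun i => ?_
  have h2 : ∀ k : Fin n ⊕ Fin n, Measurable fun p : ℝ × ((Fin n ⊕ Fin n) → ℝ) => p.2 k :=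
    fun k => (measurable_pi_apply k).comp measurable_snd
  exact ((measurable_fst.const_mul _).add
    (Finset.measurable_sum _ fun j _ => (h2 _).const_mul _)).add ((h2 _).const_mul σ)

/-- The law of the observation vector depends only on `a`, `σ` and `c = f·b`. -/
lemma obs_law {μ : Measure Ω} {X Y w v : ℕ → Ω → ℝ} {a b f σ : ℝ}
    (hs : System μ X Y w v a b f σ) (n : ℕ) (hn : 0 < n) :
    μ.map (fun ω => fun i : Fin n => X (i + 1) ω) =
      ((gaussianReal 0 (Real.toNNReal ((f * b) ^ 2 / (1 - a ^ 2)))).prod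
        (Measure.pi fun _ : Fin n ⊕ Fin n => gaussianReal 0 1)).map
        (obsMap a σ (f * b) n hn) := by
  haveI := hs.isProb
  have h1a : (0:ℝ) < 1 - a ^ 2 := by nlinarith [hs.ha]
  set A : Ω → ℝ := fun ω => f * Y 0 ω with hA
  set N : Ω → (Fin n ⊕ Fin n) → ℝ := fun ω k =>
    Sum.elim (fun i : Fin n => w ((i : ℕ) + 1) ω) (fun j : Fin n => v ((j : ℕ) + 1) ω) k with hN
  have hAmeas : Measurable A := (hs.measY 0).const_mul f
  have hNmeas : Measurable N := measurable_pi_lambda _ fun k => by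
    cases k with
    | inl i => exact hs.measw _
    | inr j => exact hs.measv _
  -- Step A: pointwise identity
  have hobs : (fun ω => fun i : Fin n => X ((i : ℕ) + 1) ω)
      = fun ω => obsMap a σ (f * b) n hn (A ω, N ω) := by
    funext ω i
    rw [hs.hX ((i : ℕ) + 1) (Nat.le_add_left 1 _) ω,
      show ((i : ℕ) + 1 - 1 : ℕ) = (i : ℕ) from rfl, Y_expand hs (i : ℕ) ω]
    show f * _ + σ * w ((i : ℕ) + 1) ω
      = a ^ (i : ℕ) * (f * Y 0 ω) + _ + σ * N ω (Sum.inl i)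
    have hN1 : N ω (Sum.inl i) = w ((i : ℕ) + 1) ω := rfl
    have hsum : ∑ j ∈ Finset.range (i : ℕ),
        (f * b) * a ^ ((i : ℕ) - 1 - j) * N ω (Sum.inr ⟨j % n, Nat.mod_lt j hn⟩)
        = ∑ j ∈ Finset.range (i : ℕ), f * (a ^ ((i : ℕ) - 1 - j) * (b * v (j + 1) ω)) := by
      refine Finset.sum_congr rfl fun j hj => ?_
      have hj' : j < n := lt_of_lt_of_le (Finset.mem_range.1 hj) (le_of_lt i.isLt)
      have : N ω (Sum.inr ⟨j % n, Nat.mod_lt j hn⟩) = v (j % n + 1) ω := rfl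
      rw [this, Nat.mod_eq_of_lt hj']
      ring
    rw [hN1, hsum, mul_add, Finset.mul_sum]
    ring
  -- Step B: joint law of (A, N)
  have hIndep : IndepFun A N μ := by
    have hψ : Measurable (fun z : (ℕ ⊕ ℕ) → ℝ =>
        (fun k : Fin n ⊕ Fin n => z (Sum.map Fin.val Fin.val k))) :=
      measurable_pi_lambda _ fun k => measurable_pi_apply _
    have := hs.indepInit.comp (φ := fun q : ℝ × ℝ => f * q.2)
      (ψ := fun z : (ℕ ⊕ ℕ) → ℝ => fun k : Fin n ⊕ Fin n => z (Sum.map Fin.val Fin.val k))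
      (measurable_snd.const_mul f) hψ
    have heq : ((fun z : (ℕ ⊕ ℕ) → ℝ =>
        (fun k : Fin n ⊕ Fin n => z (Sum.map Fin.val Fin.val k))) ∘ noisePath w v) = N := by
      funext ω k; cases k <;> rfl
    rwa [heq] at this
  have hmapA : μ.map A = gaussianReal 0 (Real.toNNReal ((f * b) ^ 2 / (1 - a ^ 2))) := by
    rw [show A = ((f * ·) ∘ Y 0) from rfl, ← Measure.map_map (measurable_const_mul f)
      (hs.measY 0), hs.law_Y0, gaussianReal_map_const_mul]
    congr 1
    · simp
    · apply NNReal.coe_injective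
      rw [NNReal.coe_mul, NNReal.coe_mk, Real.coe_toNNReal _ (by positivity),
        Real.coe_toNNReal _ (by positivity)]
      ring
  have hmapN : μ.map N = Measure.pi (fun _ : Fin n ⊕ Fin n => gaussianReal 0 1) := by
    have hinj : Function.Injective (Sum.map (Fin.val : Fin n → ℕ) Fin.val) :=
      Function.Injective.sumMap (f := (Fin.val : Fin n → ℕ)) (g := (Fin.val : Fin n → ℕ))
        Fin.val_injective Fin.val_injective
    have hindep := iIndepFun_precomp hinj hs.indepNoise
    have hfm : ∀ k : Fin n ⊕ Fin n, Measurable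
        (fun ω => Sum.elim (fun t => w (t + 1)) (fun t => v (t + 1))
          (Sum.map Fin.val Fin.val k) ω) := fun k => by
      cases k with
      | inl i => exact hs.measw _
      | inr j => exact hs.measv _
    have heqN : N = (fun ω (k : Fin n ⊕ Fin n) =>
        Sum.elim (fun t => w (t + 1)) (fun t => v (t + 1)) (Sum.map Fin.val Fin.val k) ω) := by
      funext ω k; cases k <;> rfl
    rw [heqN, map_tuple_eq_pi hfm hindep]
    congr 1
    funext k
    cases k with
    | inl i => exact hs.law_w _ (Nat.le_add_left 1 _)
    | inr j => exact hs.law_v _ (Nat.le_add_left 1 _)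
  have hmapE : μ.map (fun ω => (A ω, N ω)) = (μ.map A).prod (μ.map N) :=
    (indepFun_iff_map_prod_eq_prod_map_map hAmeas.aemeasurable hNmeas.aemeasurable).1 hIndep
  -- assemble
  rw [hobs, show (fun ω => obsMap a σ (f * b) n hn (A ω, N ω))
    = obsMap a σ (f * b) n hn ∘ (fun ω => (A ω, N ω)) from rfl,
    ← Measure.map_map (meas_obsMap a σ (f * b) n hn) (hAmeas.prodMk hNmeas),
    hmapE, hmapA, hmapN]


/-- the pair `(f, b)` is not identifiable. If `f₁·b₁ = f₂·b₂` then for every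
`n ≥ 1` the law of `(X_1, …, X_n)` under `(f₁, b₁)` coincides with the law under
`(f₂, b₂)`; consequently no consistent estimator of the pair `(f, b)` exists. -/
theorem pair_f_b_not_identifiable
    {Ω₁ : Type*} [MeasurableSpace Ω₁] {Ω₂ : Type*} [MeasurableSpace Ω₂]
    (μ₁ : Measure Ω₁) (μ₂ : Measure Ω₂)
    (X₁ Y₁ w₁ v₁ : ℕ → Ω₁ → ℝ) (X₂ Y₂ w₂ v₂ : ℕ → Ω₂ → ℝ)
    (a σ f₁ b₁ f₂ b₂ : ℝ)
    (hsys₁ : System μ₁ X₁ Y₁ w₁ v₁ a b₁ f₁ σ)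
    (hsys₂ : System μ₂ X₂ Y₂ w₂ v₂ a b₂ f₂ σ)
    (hprod : f₁ * b₁ = f₂ * b₂) :
    (∀ n : ℕ, 1 ≤ n →
      μ₁.map (fun ω => fun i : Fin n => X₁ (i + 1) ω) =
        μ₂.map (fun ω => fun i : Fin n => X₂ (i + 1) ω)) ∧
    ¬ ∃ est : (n : ℕ) → (Fin n → ℝ) → ℝ × ℝ,
        (∀ n, Measurable (est n)) ∧
        ∀ (Ω : Type) (_ : MeasurableSpace Ω) (μ : Measure Ω)
          (X Y w v : ℕ → Ω → ℝ) (f b : ℝ),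
          System μ X Y w v a b f σ →
          ∀ ε : ℝ, 0 < ε →
            Tendsto (fun n : ℕ =>
                μ {ω | ε ≤ dist (est n (fun i : Fin n => X (i + 1) ω)) (f, b)})
              atTop (nhds 0) := by
  constructor
  · intro n hn
    rw [obs_law hsys₁ n hn, obs_law hsys₂ n hn, hprod]
  · rintro ⟨est, -, hcons⟩
    have hsysA := transfer hsys₁
    have hsysB := scale hsysA
    have hb₁ := hsys₁.hb
    have hPQ : ((f₁, b₁) : ℝ × ℝ) ≠ (2 * f₁, b₁ / 2) := by
      intro h
      have hb := congrArg Prod.snd h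
      simp only at hb
      linarith
    have hd : 0 < dist ((f₁, b₁) : ℝ × ℝ) (2 * f₁, b₁ / 2) := dist_pos.2 hPQ
    set ε : ℝ := dist ((f₁, b₁) : ℝ × ℝ) (2 * f₁, b₁ / 2) / 2 with hεdef
    have hε : 0 < ε := by positivity
    have hA := hcons CanSp inferInstance (μ₁.map (emb X₁ Y₁ w₁ v₁)) (cX a b₁ f₁ σ)
      (cY a b₁) cw cv f₁ b₁ hsysA ε hε
    have hB := hcons CanSp inferInstance (μ₁.map (emb X₁ Y₁ w₁ v₁)) (cX a b₁ f₁ σ)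
      (fun t p => cY a b₁ t p / 2) cw cv (2 * f₁) (b₁ / 2) hsysB ε hε
    haveI : IsProbabilityMeasure (μ₁.map (emb X₁ Y₁ w₁ v₁)) := hsysA.isProb
    have hone : ∀ n : ℕ, (1 : ENNReal) ≤
        (μ₁.map (emb X₁ Y₁ w₁ v₁)) {ω | ε ≤
          dist (est n (fun i : Fin n => cX a b₁ f₁ σ (i + 1) ω)) (f₁, b₁)} +
        (μ₁.map (emb X₁ Y₁ w₁ v₁)) {ω | ε ≤
          dist (est n (fun i : Fin n => cX a b₁ f₁ σ (i + 1) ω)) (2 * f₁, b₁ / 2)} := by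
      intro n
      have hcover : (Set.univ : Set CanSp) ⊆
          {ω | ε ≤ dist (est n (fun i : Fin n => cX a b₁ f₁ σ (i + 1) ω)) (f₁, b₁)} ∪
          {ω | ε ≤ dist (est n (fun i : Fin n => cX a b₁ f₁ σ (i + 1) ω)) (2 * f₁, b₁ / 2)} := by
        intro p _
        by_contra hc
        simp only [Set.mem_union, Set.mem_setOf_eq, not_or, not_le] at hc
        have htri := dist_triangle ((f₁, b₁) : ℝ × ℝ)
          (est n (fun i : Fin n => cX a b₁ f₁ σ (i + 1) p)) (2 * f₁, b₁ / 2)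
        rw [dist_comm ((f₁, b₁) : ℝ × ℝ)
          (est n (fun i : Fin n => cX a b₁ f₁ σ (i + 1) p))] at htri
        linarith [hc.1, hc.2, htri]
      calc (1 : ENNReal) = (μ₁.map (emb X₁ Y₁ w₁ v₁)) Set.univ := measure_univ.symm
        _ ≤ _ := (measure_mono hcover).trans (measure_union_le _ _)
    have hsum := hA.add hB
    rw [add_zero] at hsum
    have hle : (1 : ENNReal) ≤ 0 := ge_of_tendsto' hsum hone
    simp at hle

end HiddenAR
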